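/- Let e : [t₀, ∞) → ℝᵐ satisfy e(t₀) = 0 and ‖e(t)‖ ≤ (P/L)(exp(L(t−t₀)) − 1) + ⌈(t−t₀)/T_v⌉·J_v with L, P > 0, T_v > 0, J_v ≥ 0, and let Δ > 0 satisfy Δ − J_v > 0 (so N = ⌊Δ/J_v⌋ ≥ 1 when J_v > 0). For each integer k with 1 ≤ k ≤ N, let T_k = (1/L)·log(1 + L(Δ − k·J_v)/P). Then any time t* with ‖e(t*)‖ ≥ Δ satisfies t* − t₀ ≥ max over 1 ≤ k ≤ N of min{k·T_v, T_k}, and this bound is strictly positive. -/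
import Mathlib


theorem stmt11 {m : ℕ} (e : ℝ → EuclideanSpace ℝ (Fin m)) (t₀ L P Tv Jv Δ : ℝ)
    (N : ℕ)
    (hL : 0 < L) (hP : 0 < P) (hTv : 0 < Tv) (hJv : 0 ≤ Jv)
    (hΔJ : 0 < Δ - Jv)
    (hN1 : 1 ≤ N)
    (hNk : ∀ k : ℕ, 1 ≤ k → k ≤ N → 0 < Δ - (k : ℝ) * Jv)
    (h0 : e t₀ = 0)
    (hbound : ∀ t, t₀ ≤ t →
      ‖e t‖ ≤ (P / L) * (Real.exp (L * (t - t₀)) - 1) + (⌈(t - t₀) / Tv⌉ : ℝ) * Jv) :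
    ∀ tstar, t₀ ≤ tstar → Δ ≤ ‖e tstar‖ →
      (Finset.Icc 1 N).sup' (Finset.nonempty_Icc.mpr hN1)
          (fun k => min ((k : ℝ) * Tv)
            ((1 / L) * Real.log (1 + L * (Δ - (k : ℝ) * Jv) / P)))
        ≤ tstar - t₀ ∧
      0 < (Finset.Icc 1 N).sup' (Finset.nonempty_Icc.mpr hN1)
          (fun k => min ((k : ℝ) * Tv)
            ((1 / L) * Real.log (1 + L * (Δ - (k : ℝ) * Jv) / P))) := by
  intro tstar ht hΔ
  constructor
  · apply Finset.sup'_le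
    intro k hk
    simp only [Finset.mem_Icc] at hk
    obtain ⟨hk1, hkN⟩ := hk
    by_contra hc
    push_neg at hc
    rw [lt_min_iff] at hc
    obtain ⟨h1, h2⟩ := hc
    have hx : 0 ≤ tstar - t₀ := by linarith
    have hposk : 0 < Δ - (k : ℝ) * Jv := hNk k hk1 hkN
    -- ceil bound
    have hceil : (⌈(tstar - t₀) / Tv⌉ : ℝ) ≤ (k : ℝ) := by
      have : (tstar - t₀) / Tv ≤ (k : ℝ) := by
        rw [div_le_iff₀ hTv]; linarith
      exact_mod_cast (Int.ceil_le.mpr (by exact_mod_cast this))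
    have hceilJ : (⌈(tstar - t₀) / Tv⌉ : ℝ) * Jv ≤ (k : ℝ) * Jv :=
      mul_le_mul_of_nonneg_right hceil hJv
    -- exp bound
    have hexp : Real.exp (L * (tstar - t₀)) < 1 + L * (Δ - (k : ℝ) * Jv) / P := by
      have hlog : L * (tstar - t₀) < Real.log (1 + L * (Δ - (k : ℝ) * Jv) / P) := by
        have := (mul_lt_mul_iff_right₀ hL).mpr h2
        rw [← mul_assoc, mul_one_div, div_self hL.ne', one_mul] at this
        linarith
      calc Real.exp (L * (tstar - t₀)) < Real.exp (Real.log (1 + L * (Δ - (k : ℝ) * Jv) / P)) :=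
            Real.exp_lt_exp.mpr hlog
        _ = 1 + L * (Δ - (k : ℝ) * Jv) / P := Real.exp_log (by positivity)
    have hPL : (P / L) * (Real.exp (L * (tstar - t₀)) - 1) < Δ - (k : ℝ) * Jv := by
      have h := mul_lt_mul_of_pos_left (sub_lt_sub_right hexp 1) (div_pos hP hL)
      have : (P / L) * (1 + L * (Δ - (k : ℝ) * Jv) / P - 1) = Δ - (k : ℝ) * Jv := by
        field_simp; ring
      linarith
    have := hbound tstar ht
    linarith
  · refine lt_of_lt_of_le ?_ (Finset.le_sup' _ (Finset.mem_Icc.mpr ⟨le_refl 1, hN1⟩))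
    simp only [Nat.cast_one, one_mul, lt_min_iff]
    refine ⟨hTv, ?_⟩
    have : 0 < Real.log (1 + L * (Δ - Jv) / P) := by
      apply Real.log_pos
      have : 0 < L * (Δ - Jv) / P := by positivity
      linarith
    positivity
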